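/- Let p be an odd prime, n ≥ 1, and R a commutative ring in which p·1 = 0. In the ring D = R[ε, X]/(ε², X^{p^n}), let Q(R) be the set of pairs (f₁, f₂) with f₁ = ε + Σ_{i=0}^{n−1} a_i X^{p^i} and f₂ = X + Σ_{i=1}^{n−1} b_i X^{p^i} (a_i, b_i ∈ R). For (f₁,f₂), (g₁,g₂) ∈ Q(R) with g₁ = ε + Σ_{i=0}^{n−1} c_i X^{p^i} and g₂ = X + Σ_{i=1}^{n−1} d_i X^{p^i}, define their product to be (f₁ + Σ_{i=0}^{n−1} c_i f₂^{p^i}, f₂ + Σ_{i=1}^{n−1} d_i f₂^{p^i}). Then this product is well defined (the result again lies in Q(R)) and makes Q(R) a group with identity element (ε, X). -/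

import Mathlib

namespace Stmt8Aux
open Finset MvPolynomial

noncomputable section

variable {R : Type} [CommRing R]

/-- `∑ i ∈ s, C (e i) * X1 ^ (p ^ i)` -/
def PP (p : ℕ) (s : Finset ℕ) (e : ℕ → R) : MvPolynomial (Fin 2) R :=
  ∑ i ∈ s, C (e i) * X 1 ^ p ^ i

/-- composition coefficients -/
def EE (p n : ℕ) (c b : ℕ → R) (k : ℕ) : R :=
  ∑ i ∈ range n, ∑ j ∈ range n, if i + j = k then c i * b j ^ p ^ i else 0

def Jd (p n : ℕ) (R : Type) [CommRing R] : Ideal (MvPolynomial (Fin 2) R) :=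
  Ideal.span {X 0 ^ 2, X 1 ^ p ^ n}

lemma charP_aux (p : ℕ) (hp : p.Prime) (hpR : (p : R) = 0) [Nontrivial R] : CharP R p := by
  obtain ⟨q, hq⟩ := CharP.exists R
  have hdvd : q ∣ p := (CharP.cast_eq_zero_iff R q p).mp hpR
  rcases hp.eq_one_or_self_of_dvd q hdvd with h1 | h
  · exfalso
    have : ((1 : ℕ) : R) = 0 := (CharP.cast_eq_zero_iff R q 1).mpr (by rw [h1])
    simp at this
  · exact h ▸ hq

lemma PP_pow (p : ℕ) (hp : p.Prime) (hpR : (p : R) = 0) (s : Finset ℕ) (b : ℕ → R) (m : ℕ) :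
    (PP p s b : MvPolynomial (Fin 2) R) ^ p ^ m
      = ∑ j ∈ s, C (b j ^ p ^ m) * X 1 ^ p ^ (m + j) := by
  rcases subsingleton_or_nontrivial R with h | h
  · haveI : Subsingleton (MvPolynomial (Fin 2) R) :=
      ⟨fun a b => by ext m; exact Subsingleton.elim _ _⟩
    exact Subsingleton.elim _ _
  · haveI := charP_aux p hp hpR
    haveI : Fact p.Prime := ⟨hp⟩
    rw [PP, sum_pow_char_pow]
    refine Finset.sum_congr rfl fun j hj => ?_
    rw [mul_pow, ← C_pow, ← pow_mul, ← pow_add, add_comm j m]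

lemma X1_pow_mem (p n k : ℕ) (hp1 : 1 ≤ p) (h : n ≤ k) :
    (X 1 : MvPolynomial (Fin 2) R) ^ p ^ k ∈ Jd p n R := by
  have hle : p ^ n ≤ p ^ k := Nat.pow_le_pow_right hp1 h
  have : (X 1 : MvPolynomial (Fin 2) R) ^ p ^ k = X 1 ^ p ^ n * X 1 ^ (p ^ k - p ^ n) := by
    rw [← pow_add]; congr 1; omega
  rw [this]
  exact Ideal.mul_mem_right _ _ (Ideal.subset_span (by simp))

lemma comp_key (p n : ℕ) (hp : p.Prime) (hpR : (p : R) = 0) (c b : ℕ → R) :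
    Ideal.Quotient.mk (Jd p n R) (∑ i ∈ range n, C (c i) * (PP p (range n) b) ^ p ^ i)
      = Ideal.Quotient.mk (Jd p n R) (PP p (range n) (EE p n c b)) := by
  have hL : ∑ i ∈ range n, C (c i) * (PP p (range n) b : MvPolynomial (Fin 2) R) ^ p ^ i
      = ∑ i ∈ range n, ∑ j ∈ range n, C (c i * b j ^ p ^ i) * X 1 ^ p ^ (i + j) := by
    refine sum_congr rfl fun i _ => ?_
    rw [PP_pow p hp hpR, mul_sum]
    exact sum_congr rfl fun j _ => by rw [C_mul]; ring
  have hR : (PP p (range n) (EE p n c b) : MvPolynomial (Fin 2) R)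
      = ∑ i ∈ range n, ∑ j ∈ range n,
          if i + j < n then C (c i * b j ^ p ^ i) * X 1 ^ p ^ (i + j) else 0 := by
    rw [PP]
    calc (∑ k ∈ range n, C (EE p n c b k) * X 1 ^ p ^ k : MvPolynomial (Fin 2) R)
        = ∑ k ∈ range n, ∑ i ∈ range n, ∑ j ∈ range n,
            (if i + j = k then C (c i * b j ^ p ^ i) * X 1 ^ p ^ k else 0) := by
          refine sum_congr rfl fun k _ => ?_
          rw [EE, map_sum, sum_mul]
          refine sum_congr rfl fun i _ => ?_
          rw [map_sum, sum_mul]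
          refine sum_congr rfl fun j _ => ?_
          split_ifs with h <;> simp
      _ = ∑ i ∈ range n, ∑ j ∈ range n, ∑ k ∈ range n,
            (if i + j = k then C (c i * b j ^ p ^ i) * X 1 ^ p ^ k else 0) := by
          rw [Finset.sum_comm]
          refine sum_congr rfl fun i _ => ?_
          rw [Finset.sum_comm]
      _ = ∑ i ∈ range n, ∑ j ∈ range n,
            if i + j < n then C (c i * b j ^ p ^ i) * X 1 ^ p ^ (i + j) else 0 := by
          refine sum_congr rfl fun i _ => sum_congr rfl fun j _ => ?_
          rw [Finset.sum_ite_eq (range n) (i + j)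
            (fun k => C (c i * b j ^ p ^ i) * X 1 ^ p ^ k)]
          simp only [Finset.mem_range]
  rw [Ideal.Quotient.eq, hL, hR, ← Finset.sum_sub_distrib]
  refine Ideal.sum_mem _ fun i _ => ?_
  rw [← Finset.sum_sub_distrib]
  refine Ideal.sum_mem _ fun j _ => ?_
  split_ifs with h
  · simp
  · rw [sub_zero]
    exact Ideal.mul_mem_left _ _ (X1_pow_mem p n (i + j) hp.one_le (by omega))

lemma EE_zero_at_zero (p n : ℕ) (c b : ℕ → R) (hc : c 0 = 0) : EE p n c b 0 = 0 := by
  rw [EE]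
  refine Finset.sum_eq_zero fun i _ => Finset.sum_eq_zero fun j _ => ?_
  split_ifs with h
  · have hi : i = 0 := by omega
    rw [hi, hc, zero_mul]
  · rfl

lemma PP_add (p : ℕ) (s : Finset ℕ) (e f : ℕ → R) :
    (PP p s (fun k => e k + f k) : MvPolynomial (Fin 2) R) = PP p s e + PP p s f := by
  rw [PP, PP, PP, ← sum_add_distrib]
  exact sum_congr rfl fun i _ => by rw [C_add, add_mul]

lemma PP_zero (p : ℕ) (s : Finset ℕ) :
    (PP p s (fun _ => (0 : R)) : MvPolynomial (Fin 2) R) = 0 := by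
  simp [PP]

lemma range_eq_insert (n : ℕ) (hn : 1 ≤ n) : range n = insert 0 (Ico 1 n) := by
  ext i; simp [Finset.mem_range, Finset.mem_Ico]; omega

lemma PP_update (p n : ℕ) (hn : 1 ≤ n) (b : ℕ → R) :
    (PP p (range n) (Function.update b 0 1) : MvPolynomial (Fin 2) R)
      = X 1 + PP p (Ico 1 n) b := by
  rw [PP, PP, range_eq_insert n hn, Finset.sum_insert (by simp)]
  congr 1
  · simp
  · exact sum_congr rfl fun i hi =>
      by rw [Function.update_of_ne (by have := Finset.mem_Ico.mp hi; omega)]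

lemma sum_Ico_eq_range (p n : ℕ) (hn : 1 ≤ n) (d : ℕ → R) (g : MvPolynomial (Fin 2) R) :
    ∑ i ∈ Ico 1 n, C (d i) * g ^ p ^ i
      = ∑ i ∈ range n, C (Function.update d 0 0 i) * g ^ p ^ i := by
  rw [range_eq_insert n hn, Finset.sum_insert (by simp)]
  rw [show (Function.update d 0 0 0) = 0 from Function.update_self 0 0 d, map_zero, zero_mul,
    zero_add]
  exact (sum_congr rfl fun i hi =>
    by rw [Function.update_of_ne (by have := Finset.mem_Ico.mp hi; omega)]).symm

lemma PP_range_eq_Ico (p n : ℕ) (hn : 1 ≤ n) (e : ℕ → R) (he : e 0 = 0) :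
    (PP p (range n) e : MvPolynomial (Fin 2) R) = PP p (Ico 1 n) e := by
  rw [PP, PP, range_eq_insert n hn, Finset.sum_insert (by simp), he, map_zero, zero_mul, zero_add]

lemma F2_pow_mem (p n : ℕ) (hp1 : 1 ≤ p) (b : ℕ → R) :
    ((X 1 + PP p (Ico 1 n) b : MvPolynomial (Fin 2) R)) ^ p ^ n ∈ Jd p n R := by
  have hdvd : (X 1 : MvPolynomial (Fin 2) R) ∣ X 1 + PP p (Ico 1 n) b := by
    refine dvd_add dvd_rfl ?_
    rw [PP]
    exact Finset.dvd_sum fun i hi =>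
      Dvd.dvd.mul_left (dvd_pow_self (X 1) (by positivity)) _
  obtain ⟨w, hw⟩ := hdvd
  rw [hw, mul_pow]
  exact Ideal.mul_mem_right _ _ (Ideal.subset_span (by simp))

def invC (p : ℕ) (b : ℕ → R) : ℕ → R
  | k => -(∑ i ∈ (Finset.Icc 1 k).attach,
      Function.update b 0 0 i.1 * (if i.1 = k then 1 else invC p b (k - i.1)) ^ p ^ i.1)
  decreasing_by
    have := Finset.mem_Icc.mp i.2
    omega

lemma invC_eq (p : ℕ) (b : ℕ → R) (k : ℕ) :
    invC p b k = -(∑ i ∈ Finset.Icc 1 k,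
      Function.update b 0 0 i * (if i = k then 1 else invC p b (k - i)) ^ p ^ i) := by
  rw [invC, ← Finset.sum_attach (Finset.Icc 1 k)
    (fun i => Function.update b 0 0 i * (if i = k then 1 else invC p b (k - i)) ^ p ^ i)]

lemma invC_spec (p n : ℕ) (b : ℕ → R) (k : ℕ) (hk1 : 1 ≤ k) (hkn : k < n) :
    invC p b k
      + EE p n (Function.update b 0 0) (Function.update (invC p b) 0 1) k = 0 := by
  have hEE : EE p n (Function.update b 0 0) (Function.update (invC p b) 0 1) k
      = ∑ i ∈ Finset.Icc 1 k,
          Function.update b 0 0 i * (if i = k then 1 else invC p b (k - i)) ^ p ^ i := by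
    have hsub : Finset.Icc 1 k ⊆ range n := fun i hi => by
      have := Finset.mem_Icc.mp hi; exact Finset.mem_range.mpr (by omega)
    rw [EE]
    rw [← Finset.sum_subset hsub (fun i hi hni => ?_)]
    · refine sum_congr rfl fun i hi => ?_
      have hik := Finset.mem_Icc.mp hi
      rw [Finset.sum_eq_single (k - i)]
      · rw [if_pos (by omega)]
        congr 1
        rcases eq_or_ne i k with h | h
        · rw [if_pos h, h, Nat.sub_self, Function.update_self]
        · rw [if_neg h, Function.update_of_ne (by omega)]
      · intro j _ hj
        rw [if_neg (by omega)]
      · intro hnotin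
        exact absurd (Finset.mem_range.mpr (by omega)) hnotin
    · refine Finset.sum_eq_zero fun j _ => ?_
      have hni2 : ¬(1 ≤ i ∧ i ≤ k) := by simpa [Finset.mem_Icc] using hni
      split_ifs with h
      · have hi0 : i = 0 := by omega
        rw [hi0, Function.update_self, zero_mul]
      · rfl
  rw [hEE, invC_eq p b k]
  exact neg_add_cancel _

def Psi (p n : ℕ) {R : Type} [CommRing R] (v : MvPolynomial (Fin 2) R ⧸ Jd p n R)
    (hv : v ^ p ^ n = 0) :
    (MvPolynomial (Fin 2) R ⧸ Jd p n R) →ₐ[R] (MvPolynomial (Fin 2) R ⧸ Jd p n R) :=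
  Ideal.Quotient.liftₐ (Jd p n R) (aeval ![Ideal.Quotient.mk (Jd p n R) (X 0), v]) (by
    intro a ha
    have hker : Jd p n R ≤
        RingHom.ker (aeval ![Ideal.Quotient.mk (Jd p n R) (X 0), v]).toRingHom := by
      refine Ideal.span_le.mpr ?_
      rintro x hx
      simp only [Set.mem_insert_iff, Set.mem_singleton_iff] at hx
      rcases hx with rfl | rfl
      · show aeval ![Ideal.Quotient.mk (Jd p n R) (X 0), v] (X 0 ^ 2) = 0
        rw [map_pow, aeval_X, Matrix.cons_val_zero, ← map_pow, Ideal.Quotient.eq_zero_iff_mem]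
        exact Ideal.subset_span (by simp)
      · show aeval ![Ideal.Quotient.mk (Jd p n R) (X 0), v] (X 1 ^ p ^ n) = 0
        rw [map_pow, aeval_X, Matrix.cons_val_one, Matrix.cons_val_zero]
        exact hv
    exact hker ha)

lemma Psi_apply (p n : ℕ) {R : Type} [CommRing R] (v : MvPolynomial (Fin 2) R ⧸ Jd p n R)
    (hv : v ^ p ^ n = 0) (g : MvPolynomial (Fin 2) R) :
    Psi p n v hv (Ideal.Quotient.mk (Jd p n R) g)
      = aeval ![Ideal.Quotient.mk (Jd p n R) (X 0), v] g := by
  rw [Psi]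
  rfl

lemma Psi_mk (p n : ℕ) {R : Type} [CommRing R] (f : MvPolynomial (Fin 2) R)
    (hv : (Ideal.Quotient.mk (Jd p n R) f) ^ p ^ n = 0) (g : MvPolynomial (Fin 2) R) :
    Psi p n (Ideal.Quotient.mk (Jd p n R) f) hv (Ideal.Quotient.mk (Jd p n R) g)
      = Ideal.Quotient.mk (Jd p n R) (aeval ![X 0, f] g) := by
  rw [Psi_apply]
  have h1 : Ideal.Quotient.mk (Jd p n R) (aeval ![X 0, f] g)
      = ((Ideal.Quotient.mkₐ R (Jd p n R)).comp (aeval ![X 0, f])) g := rfl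
  rw [h1, MvPolynomial.comp_aeval]
  have h2 : (fun i => (Ideal.Quotient.mkₐ R (Jd p n R)) (![X 0, f] i))
      = ![Ideal.Quotient.mk (Jd p n R) (X 0), Ideal.Quotient.mk (Jd p n R) f] := by
    funext i; fin_cases i <;> simp [Ideal.Quotient.mkₐ_eq_mk]
  rw [h2]

lemma Psi_X0 (p n : ℕ) {R : Type} [CommRing R] (v : MvPolynomial (Fin 2) R ⧸ Jd p n R)
    (hv : v ^ p ^ n = 0) :
    Psi p n v hv (Ideal.Quotient.mk (Jd p n R) (X 0)) = Ideal.Quotient.mk (Jd p n R) (X 0) := by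
  rw [Psi_apply]; simp

lemma Psi_X1 (p n : ℕ) {R : Type} [CommRing R] (v : MvPolynomial (Fin 2) R ⧸ Jd p n R)
    (hv : v ^ p ^ n = 0) :
    Psi p n v hv (Ideal.Quotient.mk (Jd p n R) (X 1)) = v := by
  rw [Psi_apply]; simp

lemma Psi_comp (p n : ℕ) {R : Type} [CommRing R] (v w : MvPolynomial (Fin 2) R ⧸ Jd p n R)
    (hv : v ^ p ^ n = 0) (hw : w ^ p ^ n = 0) (hw2 : (Psi p n v hv w) ^ p ^ n = 0)
    (z : MvPolynomial (Fin 2) R ⧸ Jd p n R) :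
    Psi p n (Psi p n v hv w) hw2 z = Psi p n v hv (Psi p n w hw z) := by
  have : Psi p n (Psi p n v hv w) hw2 = (Psi p n v hv).comp (Psi p n w hw) := by
    apply Ideal.Quotient.algHom_ext
    apply MvPolynomial.algHom_ext
    intro i
    fin_cases i
    · show Psi p n (Psi p n v hv w) hw2 (Ideal.Quotient.mk (Jd p n R) (X 0))
        = ((Psi p n v hv).comp (Psi p n w hw)) (Ideal.Quotient.mk (Jd p n R) (X 0))
      simp only [AlgHom.comp_apply, Psi_X0]
    · show Psi p n (Psi p n v hv w) hw2 (Ideal.Quotient.mk (Jd p n R) (X 1))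
        = ((Psi p n v hv).comp (Psi p n w hw)) (Ideal.Quotient.mk (Jd p n R) (X 1))
      simp only [AlgHom.comp_apply, Psi_X1]
  rw [this, AlgHom.comp_apply]

def F1p (p n : ℕ) {R : Type} [CommRing R] (a : ℕ → R) : MvPolynomial (Fin 2) R :=
  X 0 + PP p (range n) a

def F2p (p n : ℕ) {R : Type} [CommRing R] (b : ℕ → R) : MvPolynomial (Fin 2) R :=
  X 1 + PP p (Ico 1 n) b

lemma F1p_zero (p n : ℕ) : (F1p p n (fun _ => (0 : R))) = X 0 := by
  rw [F1p, PP_zero, add_zero]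

lemma F2p_zero (p n : ℕ) : (F2p p n (fun _ => (0 : R))) = X 1 := by
  rw [F2p, PP_zero, add_zero]

lemma aeval_sub' (p : ℕ) (f : MvPolynomial (Fin 2) R) (s : Finset ℕ) (e : ℕ → R) :
    aeval ![X 0, f] (PP p s e : MvPolynomial (Fin 2) R) = ∑ i ∈ s, C (e i) * f ^ p ^ i := by
  rw [PP, map_sum]
  refine sum_congr rfl fun i _ => ?_
  rw [map_mul, map_pow, aeval_X, aeval_C, MvPolynomial.algebraMap_eq]
  simp

lemma aeval_F1 (p n : ℕ) (f : MvPolynomial (Fin 2) R) (c : ℕ → R) :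
    aeval ![X 0, f] (F1p p n c) = X 0 + ∑ i ∈ range n, C (c i) * f ^ p ^ i := by
  rw [F1p, map_add, aeval_sub', aeval_X]
  simp

lemma aeval_F2 (p n : ℕ) (f : MvPolynomial (Fin 2) R) (d : ℕ → R) :
    aeval ![X 0, f] (F2p p n d) = f + ∑ i ∈ Ico 1 n, C (d i) * f ^ p ^ i := by
  rw [F2p, map_add, aeval_sub', aeval_X]
  simp

lemma Psi_congr (p n : ℕ) {R : Type} [CommRing R] (v v' z : MvPolynomial (Fin 2) R ⧸ Jd p n R)
    (h : v = v') (hv : v ^ p ^ n = 0) (hv' : v' ^ p ^ n = 0) :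
    Psi p n v hv z = Psi p n v' hv' z := by subst h; rfl

lemma Psi_id (p n : ℕ) {R : Type} [CommRing R]
    (hv : (Ideal.Quotient.mk (Jd p n R) (X 1)) ^ p ^ n = 0)
    (z : MvPolynomial (Fin 2) R ⧸ Jd p n R) :
    Psi p n (Ideal.Quotient.mk (Jd p n R) (X 1)) hv z = z := by
  have : Psi p n (Ideal.Quotient.mk (Jd p n R) (X 1)) hv = AlgHom.id R _ := by
    apply Ideal.Quotient.algHom_ext
    apply MvPolynomial.algHom_ext
    intro i
    fin_cases i
    · show Psi p n _ hv (Ideal.Quotient.mk (Jd p n R) (X 0)) = _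
      rw [Psi_X0]; rfl
    · show Psi p n _ hv (Ideal.Quotient.mk (Jd p n R) (X 1)) = _
      rw [Psi_X1]; rfl
  rw [this]; rfl

lemma mul_formula (p n : ℕ) {R : Type} [CommRing R]
    (a b c d : ℕ → R) (hv : (Ideal.Quotient.mk (Jd p n R) (F2p p n b)) ^ p ^ n = 0) :
    (Ideal.Quotient.mk (Jd p n R) (F1p p n a) - Ideal.Quotient.mk (Jd p n R) (X 0)
        + Psi p n (Ideal.Quotient.mk (Jd p n R) (F2p p n b)) hv
            (Ideal.Quotient.mk (Jd p n R) (F1p p n c)),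
      Psi p n (Ideal.Quotient.mk (Jd p n R) (F2p p n b)) hv
        (Ideal.Quotient.mk (Jd p n R) (F2p p n d)))
    = (Ideal.Quotient.mk (Jd p n R)
          (F1p p n a + ∑ i ∈ range n, C (c i) * F2p p n b ^ p ^ i),
       Ideal.Quotient.mk (Jd p n R)
          (F2p p n b + ∑ i ∈ Ico 1 n, C (d i) * F2p p n b ^ p ^ i)) := by
  rw [Prod.mk.injEq]
  constructor
  · rw [Psi_mk p n (F2p p n b) hv (F1p p n c), aeval_F1, ← map_sub, ← map_add]
    congr 1
    ring
  · rw [Psi_mk p n (F2p p n b) hv (F2p p n d), aeval_F2]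

lemma WD1 (p n : ℕ) {R : Type} [CommRing R] (hp : p.Prime) (hpR : (p : R) = 0) (hn : 1 ≤ n)
    (a b c : ℕ → R) :
    Ideal.Quotient.mk (Jd p n R) (F1p p n a + ∑ i ∈ range n, C (c i) * F2p p n b ^ p ^ i)
      = Ideal.Quotient.mk (Jd p n R)
          (F1p p n (fun k => a k + EE p n c (Function.update b 0 1) k)) := by
  have hb : (F2p p n b : MvPolynomial (Fin 2) R)
      = PP p (range n) (Function.update b 0 1) := by
    rw [F2p, PP_update p n hn b]
  rw [map_add, hb, comp_key p n hp hpR c (Function.update b 0 1), ← map_add]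
  congr 1
  rw [F1p, F1p, PP_add]
  ring

lemma WD2 (p n : ℕ) {R : Type} [CommRing R] (hp : p.Prime) (hpR : (p : R) = 0) (hn : 1 ≤ n)
    (b d : ℕ → R) :
    Ideal.Quotient.mk (Jd p n R) (F2p p n b + ∑ i ∈ Ico 1 n, C (d i) * F2p p n b ^ p ^ i)
      = Ideal.Quotient.mk (Jd p n R)
          (F2p p n (fun k => b k
            + EE p n (Function.update d 0 0) (Function.update b 0 1) k)) := by
  have hb : (F2p p n b : MvPolynomial (Fin 2) R)
      = PP p (range n) (Function.update b 0 1) := by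
    rw [F2p, PP_update p n hn b]
  rw [map_add, sum_Ico_eq_range p n hn d (F2p p n b), hb,
    comp_key p n hp hpR (Function.update d 0 0) (Function.update b 0 1), ← map_add]
  congr 1
  have h0 : EE p n (Function.update d 0 0) (Function.update b 0 1) 0 = 0 :=
    EE_zero_at_zero p n _ _ (Function.update_self 0 0 d)
  rw [PP_range_eq_Ico p n hn _ h0]
  unfold F2p
  rw [PP_add, PP_update p n hn b]
  ring

lemma inv_spec (p n : ℕ) {R : Type} [CommRing R] (hp : p.Prime) (hpR : (p : R) = 0)
    (hn : 1 ≤ n) (b : ℕ → R) :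
    Ideal.Quotient.mk (Jd p n R)
        (F2p p n (invC p b) + ∑ i ∈ Ico 1 n, C (b i) * F2p p n (invC p b) ^ p ^ i)
      = Ideal.Quotient.mk (Jd p n R) (X 1) := by
  rw [WD2 p n hp hpR hn (invC p b) b]
  congr 1
  unfold F2p
  have hz : (PP p (Ico 1 n) (fun k => invC p b k
      + EE p n (Function.update b 0 0) (Function.update (invC p b) 0 1) k)
      : MvPolynomial (Fin 2) R) = 0 := by
    rw [PP]
    refine Finset.sum_eq_zero fun k hk => ?_
    have hk2 := Finset.mem_Ico.mp hk
    rw [invC_spec p n b k hk2.1 hk2.2, map_zero, zero_mul]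
  rw [hz, add_zero]

theorem main_aux (p n : ℕ) (hp : p.Prime) (hn : 1 ≤ n) {R : Type} [CommRing R]
    (hpR : (p : R) = 0)
    (Q : Set ((MvPolynomial (Fin 2) R ⧸ Jd p n R) × (MvPolynomial (Fin 2) R ⧸ Jd p n R)))
    (hQ : Q = {q | ∃ a b : ℕ → R,
      q = (Ideal.Quotient.mk (Jd p n R) (F1p p n a), Ideal.Quotient.mk (Jd p n R) (F2p p n b))}) :
    (∀ a b c d : ℕ → R,
      ((Ideal.Quotient.mk (Jd p n R) (F1p p n a + ∑ i ∈ Finset.range n,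
          C (c i) * (F2p p n b) ^ (p ^ i)),
        Ideal.Quotient.mk (Jd p n R) (F2p p n b + ∑ i ∈ Finset.Ico 1 n,
          C (d i) * (F2p p n b) ^ (p ^ i))) ∈ Q)) ∧
    (∃ (mul : Q → Q → Q) (one : Q) (inv : Q → Q),
      (∀ x y z, mul (mul x y) z = mul x (mul y z)) ∧
      (∀ x, mul one x = x) ∧ (∀ x, mul x one = x) ∧
      (∀ x, mul (inv x) x = one) ∧
      one.1 = (Ideal.Quotient.mk (Jd p n R) (X 0), Ideal.Quotient.mk (Jd p n R) (X 1)) ∧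
      (∀ (a b c d : ℕ → R) (x y : Q),
        x.1 = (Ideal.Quotient.mk (Jd p n R) (F1p p n a), Ideal.Quotient.mk (Jd p n R) (F2p p n b)) →
        y.1 = (Ideal.Quotient.mk (Jd p n R) (F1p p n c), Ideal.Quotient.mk (Jd p n R) (F2p p n d)) →
        (mul x y).1 =
          (Ideal.Quotient.mk (Jd p n R) (F1p p n a + ∑ i ∈ Finset.range n,
              C (c i) * (F2p p n b) ^ (p ^ i)),
           Ideal.Quotient.mk (Jd p n R) (F2p p n b + ∑ i ∈ Finset.Ico 1 n,
              C (d i) * (F2p p n b) ^ (p ^ i))))) := by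
  classical
  have hpow : ∀ (b : ℕ → R), (Ideal.Quotient.mk (Jd p n R) (F2p p n b)) ^ p ^ n = 0 := by
    intro b
    rw [← map_pow, Ideal.Quotient.eq_zero_iff_mem]
    exact F2_pow_mem p n hp.one_le b
  constructor
  · intro a b c d
    rw [hQ]
    exact ⟨fun k => a k + EE p n c (Function.update b 0 1) k,
           fun k => b k + EE p n (Function.update d 0 0) (Function.update b 0 1) k,
           by rw [WD1 p n hp hpR hn a b c, WD2 p n hp hpR hn b d]⟩
  · have hx2 : ∀ x : Q, (x.1.2) ^ p ^ n = 0 := by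
      intro x
      obtain ⟨a, b, hx⟩ := (Set.ext_iff.mp hQ x.1).mp x.2
      rw [show x.1.2 = Ideal.Quotient.mk (Jd p n R) (F2p p n b) from by rw [hx]]
      exact hpow b
    have hmem : ∀ x : Q, ∃ a b : ℕ → R,
        x.1 = (Ideal.Quotient.mk (Jd p n R) (F1p p n a),
               Ideal.Quotient.mk (Jd p n R) (F2p p n b)) := by
      intro x
      exact (Set.ext_iff.mp hQ x.1).mp x.2
    have key : ∀ (x y : Q) (a b c d : ℕ → R),
        x.1 = (Ideal.Quotient.mk (Jd p n R) (F1p p n a),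
               Ideal.Quotient.mk (Jd p n R) (F2p p n b)) →
        y.1 = (Ideal.Quotient.mk (Jd p n R) (F1p p n c),
               Ideal.Quotient.mk (Jd p n R) (F2p p n d)) →
        (x.1.1 - Ideal.Quotient.mk (Jd p n R) (X 0) + Psi p n x.1.2 (hx2 x) y.1.1,
          Psi p n x.1.2 (hx2 x) y.1.2)
          = (Ideal.Quotient.mk (Jd p n R) (F1p p n a + ∑ i ∈ Finset.range n,
              C (c i) * (F2p p n b) ^ (p ^ i)),
             Ideal.Quotient.mk (Jd p n R) (F2p p n b + ∑ i ∈ Finset.Ico 1 n,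
              C (d i) * (F2p p n b) ^ (p ^ i))) := by
      intro x y a b c d hx hy
      have e1 : x.1.1 = Ideal.Quotient.mk (Jd p n R) (F1p p n a) := by rw [hx]
      have e2 : x.1.2 = Ideal.Quotient.mk (Jd p n R) (F2p p n b) := by rw [hx]
      have f1 : y.1.1 = Ideal.Quotient.mk (Jd p n R) (F1p p n c) := by rw [hy]
      have f2 : y.1.2 = Ideal.Quotient.mk (Jd p n R) (F2p p n d) := by rw [hy]
      rw [Psi_congr p n x.1.2 _ y.1.1 e2 (hx2 x) (hpow b),
          Psi_congr p n x.1.2 _ y.1.2 e2 (hx2 x) (hpow b), e1, f1, f2]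
      exact mul_formula p n a b c d (hpow b)
    have hmulmem : ∀ x y : Q,
        (x.1.1 - Ideal.Quotient.mk (Jd p n R) (X 0) + Psi p n x.1.2 (hx2 x) y.1.1,
          Psi p n x.1.2 (hx2 x) y.1.2) ∈ Q := by
      intro x y
      obtain ⟨a, b, hx⟩ := hmem x
      obtain ⟨c, d, hy⟩ := hmem y
      rw [key x y a b c d hx hy, hQ]
      exact ⟨fun k => a k + EE p n c (Function.update b 0 1) k,
             fun k => b k + EE p n (Function.update d 0 0) (Function.update b 0 1) k,
             by rw [WD1 p n hp hpR hn a b c, WD2 p n hp hpR hn b d]⟩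
    have honemem : ((Ideal.Quotient.mk (Jd p n R) (X 0),
        Ideal.Quotient.mk (Jd p n R) (X 1)) :
        (MvPolynomial (Fin 2) R ⧸ Jd p n R) × (MvPolynomial (Fin 2) R ⧸ Jd p n R)) ∈ Q := by
      rw [hQ]
      exact ⟨fun _ => 0, fun _ => 0, by rw [F1p_zero, F2p_zero]⟩
    have hinvmem : ∀ (a b : ℕ → R),
        ((Ideal.Quotient.mk (Jd p n R)
            (F1p p n (fun k => -(EE p n a (Function.update (invC p b) 0 1) k))),
          Ideal.Quotient.mk (Jd p n R) (F2p p n (invC p b))) :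
          (MvPolynomial (Fin 2) R ⧸ Jd p n R) × (MvPolynomial (Fin 2) R ⧸ Jd p n R)) ∈ Q := by
      intro a b
      rw [hQ]
      exact ⟨_, _, rfl⟩
    refine ⟨fun x y => ⟨(x.1.1 - Ideal.Quotient.mk (Jd p n R) (X 0)
          + Psi p n x.1.2 (hx2 x) y.1.1, Psi p n x.1.2 (hx2 x) y.1.2), hmulmem x y⟩,
      ⟨(Ideal.Quotient.mk (Jd p n R) (X 0), Ideal.Quotient.mk (Jd p n R) (X 1)), honemem⟩,
      fun x => ⟨(Ideal.Quotient.mk (Jd p n R)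
            (F1p p n (fun k => -(EE p n ((hmem x).choose)
              (Function.update (invC p ((hmem x).choose_spec.choose)) 0 1) k))),
          Ideal.Quotient.mk (Jd p n R) (F2p p n (invC p ((hmem x).choose_spec.choose)))),
        hinvmem (hmem x).choose (hmem x).choose_spec.choose⟩, ?_, ?_, ?_, ?_, rfl, ?_⟩
    · -- associativity
      intro x y z
      apply Subtype.ext
      dsimp only
      rw [Prod.mk.injEq]
      constructor
      · rw [Psi_comp p n x.1.2 y.1.2 (hx2 x) (hx2 y)]
        rw [map_add, map_sub, Psi_X0]
        abel
      · exact Psi_comp p n x.1.2 y.1.2 (hx2 x) (hx2 y) _ z.1.2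
    · -- one_mul
      intro x
      apply Subtype.ext
      dsimp only
      rw [Psi_id, Psi_id, sub_self, zero_add]
    · -- mul_one
      intro x
      apply Subtype.ext
      dsimp only
      rw [Psi_X0, Psi_X1]
      rw [show x.1.1 - Ideal.Quotient.mk (Jd p n R) (X 0)
          + Ideal.Quotient.mk (Jd p n R) (X 0) = x.1.1 by abel]
    · -- inv_mul
      intro x
      apply Subtype.ext
      have hab := (hmem x).choose_spec.choose_spec
      refine Eq.trans (key _ x _ _ (hmem x).choose (hmem x).choose_spec.choose rfl hab) ?_
      rw [Prod.mk.injEq]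
      constructor
      · rw [WD1 p n hp hpR hn _ _ _]
        have hz : (fun k => -(EE p n ((hmem x).choose)
              (Function.update (invC p ((hmem x).choose_spec.choose)) 0 1) k)
            + EE p n ((hmem x).choose)
              (Function.update (invC p ((hmem x).choose_spec.choose)) 0 1) k)
            = fun _ => (0 : R) := funext fun k => neg_add_cancel _
        rw [hz, F1p_zero]
      · exact inv_spec p n hp hpR hn (hmem x).choose_spec.choose
    · -- product formula
      intro a b c d x y hx hy
      exact key x y a b c d hx hy

end

end Stmt8Aux



/-- Let `p` be an odd prime, `n ≥ 1`, `R` a commutative ring with `p·1 = 0`, and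
`D = R[ε, X]/(ε², X^(p^n))` (below `ε = MvPolynomial.X 0` and `X = MvPolynomial.X 1`).  Let
`Q(R)` be the set of pairs `(f₁, f₂)` in `D × D` with `f₁ = ε + Σ_{i=0}^{n-1} a_i X^(p^i)`,
`f₂ = X + Σ_{i=1}^{n-1} b_i X^(p^i)`.  The product
`(f₁,f₂)·(g₁,g₂) := (f₁ + Σ_i c_i f₂^(p^i), f₂ + Σ_i d_i f₂^(p^i))` (where
`g₁ = ε + Σ c_i X^(p^i)`, `g₂ = X + Σ d_i X^(p^i)`) is well defined — the result lies in
`Q(R)` — and makes `Q(R)` a group with identity `(ε, X)`. -/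
theorem stmt_8 (p n : ℕ) (hp : p.Prime) (hodd : Odd p) (hn : 1 ≤ n)
    (R : Type) [CommRing R] (hpR : (p : R) = 0)
    (I : Ideal (MvPolynomial (Fin 2) R))
    (hI : I = Ideal.span {MvPolynomial.X 0 ^ 2, MvPolynomial.X 1 ^ (p ^ n)})
    (F1 F2 : (ℕ → R) → MvPolynomial (Fin 2) R)
    (hF1 : ∀ a, F1 a = MvPolynomial.X 0 +
      ∑ i ∈ Finset.range n, MvPolynomial.C (a i) * MvPolynomial.X 1 ^ (p ^ i))
    (hF2 : ∀ b, F2 b = MvPolynomial.X 1 +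
      ∑ i ∈ Finset.Ico 1 n, MvPolynomial.C (b i) * MvPolynomial.X 1 ^ (p ^ i))
    (Q : Set ((MvPolynomial (Fin 2) R ⧸ I) × (MvPolynomial (Fin 2) R ⧸ I)))
    (hQ : Q = {q | ∃ a b : ℕ → R,
      q = (Ideal.Quotient.mk I (F1 a), Ideal.Quotient.mk I (F2 b))}) :
    -- the product is well defined: the result again lies in Q(R)
    (∀ a b c d : ℕ → R,
      ((Ideal.Quotient.mk I (F1 a + ∑ i ∈ Finset.range n,
          MvPolynomial.C (c i) * (F2 b) ^ (p ^ i)),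
        Ideal.Quotient.mk I (F2 b + ∑ i ∈ Finset.Ico 1 n,
          MvPolynomial.C (d i) * (F2 b) ^ (p ^ i))) ∈ Q)) ∧
    -- it makes Q(R) a group with identity (ε, X)
    (∃ (mul : Q → Q → Q) (one : Q) (inv : Q → Q),
      (∀ x y z, mul (mul x y) z = mul x (mul y z)) ∧
      (∀ x, mul one x = x) ∧ (∀ x, mul x one = x) ∧
      (∀ x, mul (inv x) x = one) ∧
      one.1 = (Ideal.Quotient.mk I (MvPolynomial.X 0), Ideal.Quotient.mk I (MvPolynomial.X 1)) ∧
      (∀ (a b c d : ℕ → R) (x y : Q),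
        x.1 = (Ideal.Quotient.mk I (F1 a), Ideal.Quotient.mk I (F2 b)) →
        y.1 = (Ideal.Quotient.mk I (F1 c), Ideal.Quotient.mk I (F2 d)) →
        (mul x y).1 =
          (Ideal.Quotient.mk I (F1 a + ∑ i ∈ Finset.range n,
              MvPolynomial.C (c i) * (F2 b) ^ (p ^ i)),
           Ideal.Quotient.mk I (F2 b + ∑ i ∈ Finset.Ico 1 n,
              MvPolynomial.C (d i) * (F2 b) ^ (p ^ i))))) := by
  classical
  have hI' : I = Stmt8Aux.Jd p n R := hI
  subst hI'
  have hF1' : ∀ a, F1 a = Stmt8Aux.F1p p n a := fun a => by rw [hF1]; rfl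
  have hF2' : ∀ b, F2 b = Stmt8Aux.F2p p n b := fun b => by rw [hF2]; rfl
  simp only [hF1', hF2'] at hQ ⊢
  exact Stmt8Aux.main_aux p n hp hn hpR Q hQ
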